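/- Let Ω ⊆ ℝᴺ, let 𝒟 ⊆ Ω × ℝ × ℝᴺ × 𝕊(N), and let F : 𝒟 → ℝ be of Class M. Let u, v : Ω → ℝ satisfy: F(x, u(x), p, X) ≤ 0 whenever x ∈ Ω, (p, X) ∈ cl J^{2,+}(u, x), and (x, u(x), p, X) ∈ 𝒟; and F(y, v(y), q, Y) ≥ 0 whenever y ∈ Ω, (q, Y) ∈ cl J^{2,−}(v, y), and (y, v(y), q, Y) ∈ 𝒟. Fix x̂, ŷ ∈ Ω, p, q ∈ ℝᴺ, and a symmetric 2N×2N matrix A with block form A = [[E, B], [Bᵀ, D]] where E, D ∈ 𝕊(N). Set Ẽ = E² + B·Bᵀ, D̃ = D² + Bᵀ·B, 𝒮₁ = {E + εẼ : ε ≥ 0}, 𝒮₂ = {D + εD̃ : ε ≥ 0}, ω₁ = (x̂, u(x̂), p), ω₂ = (ŷ, v(ŷ), q). Assume {ω₁} × 𝒮₁ ⊆ 𝒟 and {ω₂} × 𝒮₂ ⊆ 𝒟, and assume that for every ε > 0 there exist X_ε, Y_ε ∈ 𝕊(N) with (p, X_ε) ∈ cl J^{2,+}(u, x̂), (q, Y_ε)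 ∈ cl J^{2,−}(v, ŷ), (x̂, u(x̂), p, X_ε) ∈ 𝒟, (ŷ, v(ŷ), q, Y_ε) ∈ 𝒟, and −(1/ε + ‖A‖)·I_{2N} ≤ [[X_ε, 0], [0, −Y_ε]] ≤ A + ε·A² (Loewner order on symmetric 2N×2N matrices). Then there exist X, Y ∈ 𝕊(N) with (p, X) ∈ cl J^{2,+}(u, x̂), (q, Y) ∈ cl J^{2,−}(v, ŷ), [[X, 0], [0, −Y]] ≤ A, and there exist functions g₁ : ℝ × 𝒮₁ → ℝ and g₂ : ℝ × 𝒮₂ → ℝ satisfying conditions (1)–(4) of the Class M definition for ω₁ (respectively ω₂) such that g₁(·, E)⁻¹(0)·I ≤ X and −g₂(·, D)⁻¹(0)·I ≤ −Y. -/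

import Mathlib

open Matrix Filter
open scoped RealInnerProductSpace Topology

/-- The Loewner partial order on matrices: `X ≤ Y` iff `Y - X` is positive semidefinite. -/
def Loewner {n : Type*} [Fintype n] (X Y : Matrix n n ℝ) : Prop := (Y - X).PosSemidef

/-- The eigenvalues of a real symmetric matrix, listed in increasing order. -/
noncomputable def eigs {N : ℕ} (X : Matrix (Fin N) (Fin N) ℝ) : Fin N → ℝ :=
  if h : X.IsHermitian then h.eigenvalues ∘ Tuple.sort h.eigenvalues else 0

/-- The smallest eigenvalue of a real symmetric matrix. -/
noncomputable def lam1 {N : ℕ} (X : Matrix (Fin N) (Fin N) ℝ) : ℝ := ⨅ i, eigs X i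

/-- The largest eigenvalue of a real symmetric matrix. -/
noncomputable def lamN {N : ℕ} (X : Matrix (Fin N) (Fin N) ℝ) : ℝ := ⨆ i, eigs X i

/-- The operator norm of a symmetric matrix: the largest absolute value of an eigenvalue. -/
noncomputable def matOpNorm {n : Type*} [Fintype n] [DecidableEq n] (A : Matrix n n ℝ) : ℝ :=
  if h : A.IsHermitian then ⨆ i, |h.eigenvalues i| else 0

/-- The quadratic form `⟨X v, v⟩` of a matrix `X` at a vector `v` of Euclidean space. -/
noncomputable def matQuad {N : ℕ} (X : Matrix (Fin N) (Fin N) ℝ)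
    (v : EuclideanSpace ℝ (Fin N)) : ℝ :=
  X.mulVec ((WithLp.equiv 2 (Fin N → ℝ)) v) ⬝ᵥ (WithLp.equiv 2 (Fin N → ℝ)) v

/-- The second-order superjet `J^{2,+}(u, x)` relative to `Ω`. -/
def Superjet {N : ℕ} (Ω : Set (EuclideanSpace ℝ (Fin N))) (u : EuclideanSpace ℝ (Fin N) → ℝ)
    (x : EuclideanSpace ℝ (Fin N)) (p : EuclideanSpace ℝ (Fin N))
    (X : Matrix (Fin N) (Fin N) ℝ) : Prop :=
  ∀ ε : ℝ, 0 < ε → ∃ δ : ℝ, 0 < δ ∧ ∀ y ∈ Ω, ‖y - x‖ < δ →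
    u y ≤ u x + ⟪p, y - x⟫ + (1 / 2) * matQuad X (y - x) + ε * ‖y - x‖ ^ 2

/-- The second-order subjet `J^{2,−}(v, y)` relative to `Ω`. -/
def Subjet {N : ℕ} (Ω : Set (EuclideanSpace ℝ (Fin N))) (v : EuclideanSpace ℝ (Fin N) → ℝ)
    (x : EuclideanSpace ℝ (Fin N)) (q : EuclideanSpace ℝ (Fin N))
    (Y : Matrix (Fin N) (Fin N) ℝ) : Prop :=
  ∀ ε : ℝ, 0 < ε → ∃ δ : ℝ, 0 < δ ∧ ∀ y ∈ Ω, ‖y - x‖ < δ →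
    v y ≥ v x + ⟪q, y - x⟫ + (1 / 2) * matQuad Y (y - x) - ε * ‖y - x‖ ^ 2

/-- The jet closure `cl J^{2,+}(u, x)`. -/
def SuperjetClosure {N : ℕ} (Ω : Set (EuclideanSpace ℝ (Fin N)))
    (u : EuclideanSpace ℝ (Fin N) → ℝ) (x : EuclideanSpace ℝ (Fin N))
    (p : EuclideanSpace ℝ (Fin N)) (X : Matrix (Fin N) (Fin N) ℝ) : Prop :=
  ∃ (xs ps : ℕ → EuclideanSpace ℝ (Fin N)) (Xs : ℕ → Matrix (Fin N) (Fin N) ℝ),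
    (∀ k, xs k ∈ Ω) ∧ (∀ k, Superjet Ω u (xs k) (ps k) (Xs k)) ∧
    Tendsto xs atTop (𝓝 x) ∧ Tendsto (fun k => u (xs k)) atTop (𝓝 (u x)) ∧
    Tendsto ps atTop (𝓝 p) ∧ Tendsto Xs atTop (𝓝 X)

/-- The jet closure `cl J^{2,−}(v, y)`. -/
def SubjetClosure {N : ℕ} (Ω : Set (EuclideanSpace ℝ (Fin N)))
    (v : EuclideanSpace ℝ (Fin N) → ℝ) (x : EuclideanSpace ℝ (Fin N))
    (q : EuclideanSpace ℝ (Fin N)) (Y : Matrix (Fin N) (Fin N) ℝ) : Prop :=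
  ∃ (xs qs : ℕ → EuclideanSpace ℝ (Fin N)) (Ys : ℕ → Matrix (Fin N) (Fin N) ℝ),
    (∀ k, xs k ∈ Ω) ∧ (∀ k, Subjet Ω v (xs k) (qs k) (Ys k)) ∧
    Tendsto xs atTop (𝓝 x) ∧ Tendsto (fun k => v (xs k)) atTop (𝓝 (v x)) ∧
    Tendsto qs atTop (𝓝 q) ∧ Tendsto Ys atTop (𝓝 Y)

/-- Conditions (1)–(4) of the Class M definition for the function `g₁` at the point `ω`
on the set `𝒮₁ = S`, with `r M = g₁(·, M)⁻¹(0)`: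
(1) for each `M ∈ S`, `t ↦ g₁(t, M)` is an increasing bijection of `ℝ` onto `ℝ`;
(2) `M ↦ g₁(·, M)⁻¹(0)` is continuous on `S` (encoded by the root function `r`);
(3) for `(ω, X) ∈ 𝒟` and `M ∈ S`, `X ≤ M` implies `−F(ω, X) ≤ g₁(λ₁(X), M)`. -/
def ClassMWitness₁ {N : ℕ}
    (D : Set (EuclideanSpace ℝ (Fin N) × ℝ × EuclideanSpace ℝ (Fin N) ×
      Matrix (Fin N) (Fin N) ℝ))
    (F : EuclideanSpace ℝ (Fin N) × ℝ × EuclideanSpace ℝ (Fin N) ×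
      Matrix (Fin N) (Fin N) ℝ → ℝ)
    (ω : EuclideanSpace ℝ (Fin N) × ℝ × EuclideanSpace ℝ (Fin N))
    (S : Set (Matrix (Fin N) (Fin N) ℝ))
    (g : ℝ → Matrix (Fin N) (Fin N) ℝ → ℝ) (r : Matrix (Fin N) (Fin N) ℝ → ℝ) : Prop :=
  (∀ M ∈ S, StrictMono (fun t => g t M) ∧ Function.Bijective (fun t => g t M)) ∧
  (∀ M ∈ S, g (r M) M = 0) ∧
  ContinuousOn r S ∧
  (∀ X : Matrix (Fin N) (Fin N) ℝ, (ω.1, ω.2.1, ω.2.2, X) ∈ D →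
    ∀ M ∈ S, Loewner X M → -F (ω.1, ω.2.1, ω.2.2, X) ≤ g (lam1 X) M)

/-- Conditions (1)–(4) of the Class M definition for the function `g₂` at the point `ω`
on the set `𝒮₂ = S`, with `r M = g₂(·, M)⁻¹(0)`:
(1) for each `M ∈ S`, `t ↦ g₂(t, M)` is an increasing bijection of `ℝ` onto `ℝ`;
(2) `M ↦ g₂(·, M)⁻¹(0)` is continuous on `S` (encoded by the root function `r`);
(4) for `(ω, Y) ∈ 𝒟` and `M ∈ S`, `−Y ≤ M` implies `−F(ω, Y) ≥ g₂(λ_N(Y), M)`. -/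
def ClassMWitness₂ {N : ℕ}
    (D : Set (EuclideanSpace ℝ (Fin N) × ℝ × EuclideanSpace ℝ (Fin N) ×
      Matrix (Fin N) (Fin N) ℝ))
    (F : EuclideanSpace ℝ (Fin N) × ℝ × EuclideanSpace ℝ (Fin N) ×
      Matrix (Fin N) (Fin N) ℝ → ℝ)
    (ω : EuclideanSpace ℝ (Fin N) × ℝ × EuclideanSpace ℝ (Fin N))
    (S : Set (Matrix (Fin N) (Fin N) ℝ))
    (g : ℝ → Matrix (Fin N) (Fin N) ℝ → ℝ) (r : Matrix (Fin N) (Fin N) ℝ → ℝ) : Prop :=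
  (∀ M ∈ S, StrictMono (fun t => g t M) ∧ Function.Bijective (fun t => g t M)) ∧
  (∀ M ∈ S, g (r M) M = 0) ∧
  ContinuousOn r S ∧
  (∀ Y : Matrix (Fin N) (Fin N) ℝ, (ω.1, ω.2.1, ω.2.2, Y) ∈ D →
    ∀ M ∈ S, Loewner (-Y) M → -F (ω.1, ω.2.1, ω.2.2, Y) ≥ g (lamN Y) M)

/-- A function `F : 𝒟 → ℝ`, `𝒟 ⊆ Ω × ℝ × ℝᴺ × 𝕊(N)`, is of **Class M** if it is continuous
in its matrix entry and, for every `ω ∈ Ω × ℝ × ℝᴺ` and all `𝒮₁, 𝒮₂ ⊆ 𝕊(N)` with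
`{ω} × 𝒮ᵢ ⊆ 𝒟`, there exist `g₁, g₂` satisfying conditions (1)–(4). -/
def ClassM {N : ℕ} (Ω : Set (EuclideanSpace ℝ (Fin N)))
    (D : Set (EuclideanSpace ℝ (Fin N) × ℝ × EuclideanSpace ℝ (Fin N) ×
      Matrix (Fin N) (Fin N) ℝ))
    (F : EuclideanSpace ℝ (Fin N) × ℝ × EuclideanSpace ℝ (Fin N) ×
      Matrix (Fin N) (Fin N) ℝ → ℝ) : Prop :=
  (∀ ω : EuclideanSpace ℝ (Fin N) × ℝ × EuclideanSpace ℝ (Fin N),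
    ContinuousOn (fun X : Matrix (Fin N) (Fin N) ℝ => F (ω.1, ω.2.1, ω.2.2, X))
      {X | (ω.1, ω.2.1, ω.2.2, X) ∈ D}) ∧
  (∀ ω : EuclideanSpace ℝ (Fin N) × ℝ × EuclideanSpace ℝ (Fin N), ω.1 ∈ Ω →
    ∀ S₁ S₂ : Set (Matrix (Fin N) (Fin N) ℝ),
      (∀ M ∈ S₁, M.IsHermitian) → (∀ M ∈ S₂, M.IsHermitian) →
      (∀ M ∈ S₁, (ω.1, ω.2.1, ω.2.2, M) ∈ D) → (∀ M ∈ S₂, (ω.1, ω.2.1, ω.2.2, M) ∈ D) →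
      ∃ (g₁ g₂ : ℝ → Matrix (Fin N) (Fin N) ℝ → ℝ)
        (r₁ r₂ : Matrix (Fin N) (Fin N) ℝ → ℝ),
        ClassMWitness₁ D F ω S₁ g₁ r₁ ∧ ClassMWitness₂ D F ω S₂ g₂ r₂)

lemma lam1_le {N : ℕ} {X : Matrix (Fin N) (Fin N) ℝ} (hX : X.IsHermitian) (i : Fin N) :
    lam1 X ≤ hX.eigenvalues i := by
  unfold lam1 eigs
  rw [dif_pos hX]
  have h := ciInf_le (f := hX.eigenvalues ∘ Tuple.sort hX.eigenvalues)
    (Set.finite_range _).bddBelow ((Tuple.sort hX.eigenvalues)⁻¹ i)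
  simp at h
  exact h

lemma le_lamN {N : ℕ} {X : Matrix (Fin N) (Fin N) ℝ} (hX : X.IsHermitian) (i : Fin N) :
    hX.eigenvalues i ≤ lamN X := by
  unfold lamN eigs
  rw [dif_pos hX]
  have h := le_ciSup (f := hX.eigenvalues ∘ Tuple.sort hX.eigenvalues)
    (Set.finite_range _).bddAbove ((Tuple.sort hX.eigenvalues)⁻¹ i)
  simp at h
  exact h

lemma diag_sub_smul_one {n : Type*} [Fintype n] [DecidableEq n] (f : n → ℝ) (c : ℝ) :
    diagonal ((RCLike.ofReal : ℝ → ℝ) ∘ f) - c • (1 : Matrix n n ℝ)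
      = diagonal (fun i => f i - c) := by
  rw [smul_one_eq_diagonal, diagonal_sub]
  rfl

lemma smul_one_sub_diag {n : Type*} [Fintype n] [DecidableEq n] (f : n → ℝ) (c : ℝ) :
    c • (1 : Matrix n n ℝ) - diagonal ((RCLike.ofReal : ℝ → ℝ) ∘ f)
      = diagonal (fun i => c - f i) := by
  rw [smul_one_eq_diagonal, diagonal_sub]
  rfl

lemma spectral_decomp {n : Type*} [Fintype n] [DecidableEq n]
    {X : Matrix n n ℝ} (hX : X.IsHermitian) (c : ℝ) :
    X - c • 1 = (hX.eigenvectorUnitary : Matrix n n ℝ) *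
      diagonal (fun i => hX.eigenvalues i - c) *
      (hX.eigenvectorUnitary : Matrix n n ℝ)ᴴ := by
  have hU : (hX.eigenvectorUnitary : Matrix n n ℝ) *
      star (hX.eigenvectorUnitary : Matrix n n ℝ) = 1 :=
    (Matrix.mem_unitaryGroup_iff).mp hX.eigenvectorUnitary.2
  have h1 : (c • 1 : Matrix n n ℝ) = (hX.eigenvectorUnitary : Matrix n n ℝ) * (c • 1) *
      star (hX.eigenvectorUnitary : Matrix n n ℝ) := by
    rw [Matrix.mul_smul, mul_one, Matrix.smul_mul, hU]
  nth_rewrite 1 [hX.spectral_theorem]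
  simp only [Unitary.conjStarAlgAut_apply, Unitary.coe_star]
  rw [h1, ← Matrix.star_eq_conjTranspose, ← sub_mul, ← mul_sub, diag_sub_smul_one]

lemma spectral_decomp' {n : Type*} [Fintype n] [DecidableEq n]
    {X : Matrix n n ℝ} (hX : X.IsHermitian) (c : ℝ) :
    c • 1 - X = (hX.eigenvectorUnitary : Matrix n n ℝ) *
      diagonal (fun i => c - hX.eigenvalues i) *
      (hX.eigenvectorUnitary : Matrix n n ℝ)ᴴ := by
  have hU : (hX.eigenvectorUnitary : Matrix n n ℝ) *
      star (hX.eigenvectorUnitary : Matrix n n ℝ) = 1 :=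
    (Matrix.mem_unitaryGroup_iff).mp hX.eigenvectorUnitary.2
  have h1 : (c • 1 : Matrix n n ℝ) = (hX.eigenvectorUnitary : Matrix n n ℝ) * (c • 1) *
      star (hX.eigenvectorUnitary : Matrix n n ℝ) := by
    rw [Matrix.mul_smul, mul_one, Matrix.smul_mul, hU]
  nth_rewrite 1 [hX.spectral_theorem]
  simp only [Unitary.conjStarAlgAut_apply, Unitary.coe_star]
  rw [h1, ← Matrix.star_eq_conjTranspose, ← sub_mul, ← mul_sub, smul_one_sub_diag]

lemma psd_sub_smul {n : Type*} [Fintype n] [DecidableEq n]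
    {X : Matrix n n ℝ} (hX : X.IsHermitian) {c : ℝ}
    (h : ∀ i, c ≤ hX.eigenvalues i) : (X - c • 1).PosSemidef := by
  rw [spectral_decomp hX c]
  exact (posSemidef_diagonal_iff.mpr fun i => sub_nonneg.2 (h i)).mul_mul_conjTranspose_same _

lemma psd_smul_sub {n : Type*} [Fintype n] [DecidableEq n]
    {X : Matrix n n ℝ} (hX : X.IsHermitian) {c : ℝ}
    (h : ∀ i, hX.eigenvalues i ≤ c) : (c • 1 - X).PosSemidef := by
  rw [spectral_decomp' hX c]
  exact (posSemidef_diagonal_iff.mpr fun i => sub_nonneg.2 (h i)).mul_mul_conjTranspose_same _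

lemma matrix_entry_tendsto {n : Type*} [Fintype n] {Ms : ℕ → Matrix n n ℝ} {M : Matrix n n ℝ}
    (h : Tendsto Ms atTop (𝓝 M)) (i j : n) :
    Tendsto (fun k => Ms k i j) atTop (𝓝 (M i j)) := by
  have h1 := (tendsto_pi_nhds.mp h) i
  exact (tendsto_pi_nhds.mp h1) j

lemma matrix_tendsto_of_entry {n : Type*} [Fintype n] {Ms : ℕ → Matrix n n ℝ} {M : Matrix n n ℝ}
    (h : ∀ i j, Tendsto (fun k => Ms k i j) atTop (𝓝 (M i j))) :
    Tendsto Ms atTop (𝓝 M) := by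
  refine tendsto_pi_nhds.mpr ?_
  intro i
  rw [tendsto_pi_nhds]
  exact h i

lemma isHermitian_of_tendsto {n : Type*} [Fintype n] {Ms : ℕ → Matrix n n ℝ} {M : Matrix n n ℝ}
    (h : ∀ k, (Ms k).IsHermitian) (hlim : Tendsto Ms atTop (𝓝 M)) : M.IsHermitian := by
  have key : ∀ i j, M j i = M i j := by
    intro i j
    have h1 := matrix_entry_tendsto hlim j i
    have h2 : (fun k => Ms k j i) = fun k => Ms k i j := by
      funext k
      simpa using (h k).apply i j
    rw [h2] at h1
    exact tendsto_nhds_unique h1 (matrix_entry_tendsto hlim i j)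
  unfold Matrix.IsHermitian
  ext i j
  simp only [Matrix.conjTranspose_apply, star_trivial]
  exact key i j

lemma quad_continuous {n : Type*} [Fintype n] (x : n → ℝ) :
    Continuous fun A : Matrix n n ℝ => star x ⬝ᵥ A.mulVec x := by
  simp only [dotProduct, Matrix.mulVec]
  refine continuous_finset_sum _ fun i _ => Continuous.mul continuous_const ?_
  exact continuous_finset_sum _ fun j _ =>
    ((continuous_apply j).comp (continuous_apply (A := fun _ : n => n → ℝ) i)).mul continuous_const

lemma posSemidef_of_tendsto {n : Type*} [Fintype n] {Ms : ℕ → Matrix n n ℝ} {M : Matrix n n ℝ}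
    (h : ∀ k, (Ms k).PosSemidef) (hlim : Tendsto Ms atTop (𝓝 M)) : M.PosSemidef := by
  refine posSemidef_iff_dotProduct_mulVec.mpr ⟨isHermitian_of_tendsto (fun k => (h k).1) hlim, fun x => ?_⟩
  have hc : Tendsto (fun k => star x ⬝ᵥ (Ms k).mulVec x) atTop (𝓝 (star x ⬝ᵥ M.mulVec x)) :=
    ((quad_continuous x).tendsto M).comp hlim
  exact ge_of_tendsto' hc fun k => (h k).dotProduct_mulVec_nonneg x


lemma quad_le_quad {n : Type*} [Fintype n] {X M : Matrix n n ℝ} (h : Loewner X M) (v : n → ℝ) :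
    v ⬝ᵥ X.mulVec v ≤ v ⬝ᵥ M.mulVec v := by
  have h2 := Matrix.PosSemidef.dotProduct_mulVec_nonneg h v
  have hs : star v = v := by funext i; simp
  rw [hs, Matrix.sub_mulVec, dotProduct_sub] at h2
  linarith

lemma quad_single {n : Type*} [Fintype n] [DecidableEq n] (X : Matrix n n ℝ) (i : n) :
    (Pi.single i 1 : n → ℝ) ⬝ᵥ X.mulVec (Pi.single i 1) = X i i := by
  simp [Matrix.mulVec_single, single_dotProduct]

lemma quad_pair {n : Type*} [Fintype n] [DecidableEq n] (X : Matrix n n ℝ) (i j : n) :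
    ((Pi.single i 1 + Pi.single j 1 : n → ℝ)) ⬝ᵥ X.mulVec (Pi.single i 1 + Pi.single j 1)
      = X i i + X i j + X j i + X j j := by
  simp [add_dotProduct, dotProduct_add, Matrix.mulVec_add, Matrix.mulVec_single,
    single_dotProduct]
  ring

lemma pair_dot {n : Type*} [Fintype n] [DecidableEq n] (i j : n) (hij : i ≠ j) :
    ((Pi.single i 1 + Pi.single j 1 : n → ℝ)) ⬝ᵥ (Pi.single i 1 + Pi.single j 1 : n → ℝ) = 2 := by
  simp [add_dotProduct, dotProduct_add, single_dotProduct,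
    Pi.single_apply, hij, Ne.symm hij]
  norm_num

lemma single_dot {n : Type*} [Fintype n] [DecidableEq n] (i : n) :
    ((Pi.single i 1 : n → ℝ)) ⬝ᵥ (Pi.single i 1 : n → ℝ) = 1 := by
  simp [single_dotProduct, Pi.single_apply]

lemma quad_lower {n : Type*} [Fintype n] [DecidableEq n] {X : Matrix n n ℝ} {c : ℝ}
    (hlow : Loewner (c • 1) X) (v : n → ℝ) : c * (v ⬝ᵥ v) ≤ v ⬝ᵥ X.mulVec v := by
  have h := quad_le_quad hlow v
  rwa [Matrix.smul_mulVec, Matrix.one_mulVec, dotProduct_smul, smul_eq_mul] at h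

lemma entry_bound {n : Type*} [Fintype n] [DecidableEq n] {X M : Matrix n n ℝ} {c : ℝ}
    (hX : X.IsHermitian)
    (hlow : Loewner (c • 1) X) (hup : Loewner X M) (i j : n) :
    |X i j| ≤ 3 * (|c| + ∑ a, ∑ b, |M a b|) := by
  set s := ∑ a, ∑ b, |M a b| with hs
  have hs0 : 0 ≤ s := Finset.sum_nonneg fun a _ => Finset.sum_nonneg fun b _ => abs_nonneg _
  have hMe : ∀ a b, |M a b| ≤ s := by
    intro a b
    calc |M a b| ≤ ∑ b', |M a b'| :=
          Finset.single_le_sum (f := fun b' => |M a b'|) (fun _ _ => abs_nonneg _) (Finset.mem_univ b)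
    _ ≤ s := Finset.single_le_sum (f := fun a' => ∑ b', |M a' b'|)
          (fun _ _ => Finset.sum_nonneg fun _ _ => abs_nonneg _) (Finset.mem_univ a)
  have hdiag : ∀ a, c ≤ X a a ∧ X a a ≤ s := by
    intro a
    constructor
    · have h1 := quad_lower hlow (Pi.single a 1)
      rwa [single_dot, mul_one, quad_single] at h1
    · have h1 := quad_le_quad hup (Pi.single a 1)
      rw [quad_single, quad_single] at h1
      exact h1.trans ((le_abs_self _).trans (hMe a a))
  rcases eq_or_ne i j with rfl | hij
  · have h := hdiag i
    rw [abs_le]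
    constructor <;> linarith [neg_abs_le c, le_abs_self c, abs_nonneg c]
  · have hsym : X j i = X i j := by simpa using hX.apply i j
    have h1 := quad_lower hlow (Pi.single i 1 + Pi.single j 1)
    rw [pair_dot i j hij, quad_pair] at h1
    have h2 := quad_le_quad hup (Pi.single i 1 + Pi.single j 1)
    rw [quad_pair, quad_pair] at h2
    have hi := hdiag i
    have hj := hdiag j
    rw [abs_le]
    constructor
    · nlinarith [neg_abs_le c, le_abs_self c, hMe i i, hMe i j, hMe j i, hMe j j,
        neg_abs_le (M i i), neg_abs_le (M i j), neg_abs_le (M j i), neg_abs_le (M j j),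
        le_abs_self (M i i), le_abs_self (M i j), le_abs_self (M j i), le_abs_self (M j j)]
    · nlinarith [neg_abs_le c, le_abs_self c, hMe i i, hMe i j, hMe j i, hMe j j,
        neg_abs_le (M i i), neg_abs_le (M i j), neg_abs_le (M j i), neg_abs_le (M j j),
        le_abs_self (M i i), le_abs_self (M i j), le_abs_self (M j i), le_abs_self (M j j)]

lemma herm_smul {n : Type*} [Fintype n] {M : Matrix n n ℝ} (h : M.IsHermitian) (c : ℝ) :
    (c • M).IsHermitian := by
  unfold Matrix.IsHermitian
  rw [Matrix.conjTranspose_smul, h.eq]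
  simp

lemma psd_smul {n : Type*} [Fintype n] {M : Matrix n n ℝ} {c : ℝ} (h : M.PosSemidef)
    (hc : 0 ≤ c) : (c • M).PosSemidef := by
  refine posSemidef_iff_dotProduct_mulVec.mpr ⟨herm_smul h.1 c, fun x => ?_⟩
  rw [Matrix.smul_mulVec, dotProduct_smul, smul_eq_mul]
  exact mul_nonneg hc (h.dotProduct_mulVec_nonneg x)

lemma psd_const_smul_one {n : Type*} [Fintype n] [DecidableEq n] {c : ℝ} (hc : 0 ≤ c) :
    (c • (1 : Matrix n n ℝ)).PosSemidef := psd_smul Matrix.PosSemidef.one hc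

lemma exists_subseq_tendsto {n : Type*} [Fintype n] {Xs : ℕ → Matrix n n ℝ} {R : ℝ}
    (hR : ∀ k i j, |Xs k i j| ≤ R) :
    ∃ (X : Matrix n n ℝ) (φ : ℕ → ℕ), StrictMono φ ∧ Tendsto (Xs ∘ φ) atTop (𝓝 X) := by
  have hcomp : IsCompact (Set.univ.pi fun _ : n => Set.univ.pi fun _ : n => Set.Icc (-R) R) :=
    isCompact_univ_pi fun _ => isCompact_univ_pi fun _ => isCompact_Icc
  have hmem : ∀ k, Xs k ∈ (Set.univ.pi fun _ : n => Set.univ.pi fun _ : n => Set.Icc (-R) R) := by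
    intro k
    refine Set.mem_univ_pi.mpr ?_
    intro i
    rw [Set.mem_univ_pi]
    intro j
    exact abs_le.mp (hR k i j)
  obtain ⟨X, -, φ, hφ, hlim⟩ := hcomp.tendsto_subseq hmem
  exact ⟨X, φ, hφ, hlim⟩

lemma loewner_block₁ {n : Type*} [Fintype n] [DecidableEq n]
    {X W P Q R S : Matrix n n ℝ}
    (h : Loewner (Matrix.fromBlocks X 0 0 W) (Matrix.fromBlocks P Q R S)) :
    Loewner X P := by
  have h2 := Matrix.PosSemidef.submatrix h (Sum.inl : n → n ⊕ n)
  have he : (Matrix.fromBlocks P Q R S - Matrix.fromBlocks X 0 0 W).submatrix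
      (Sum.inl : n → n ⊕ n) Sum.inl = P - X := by
    ext i j
    simp [Matrix.submatrix_apply, Matrix.sub_apply]
  show (P - X).PosSemidef
  rwa [he] at h2

lemma loewner_block₂ {n : Type*} [Fintype n] [DecidableEq n]
    {X W P Q R S : Matrix n n ℝ}
    (h : Loewner (Matrix.fromBlocks X 0 0 W) (Matrix.fromBlocks P Q R S)) :
    Loewner W S := by
  have h2 := Matrix.PosSemidef.submatrix h (Sum.inr : n → n ⊕ n)
  have he : (Matrix.fromBlocks P Q R S - Matrix.fromBlocks X 0 0 W).submatrix
      (Sum.inr : n → n ⊕ n) Sum.inr = S - W := by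
    ext i j
    simp [Matrix.submatrix_apply, Matrix.sub_apply]
  show (S - W).PosSemidef
  rwa [he] at h2

lemma tendsto_fromBlocks {n : Type*} [Fintype n] {Xs Ys : ℕ → Matrix n n ℝ}
    {X Y : Matrix n n ℝ}
    (hX : Tendsto Xs atTop (𝓝 X)) (hY : Tendsto Ys atTop (𝓝 Y)) :
    Tendsto (fun k => Matrix.fromBlocks (Xs k) 0 0 (Ys k)) atTop
      (𝓝 (Matrix.fromBlocks X 0 0 Y : Matrix (n ⊕ n) (n ⊕ n) ℝ)) := by
  apply matrix_tendsto_of_entry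
  rintro (i | i) (j | j) <;>
    simp only [Matrix.fromBlocks_apply₁₁, Matrix.fromBlocks_apply₁₂,
      Matrix.fromBlocks_apply₂₁, Matrix.fromBlocks_apply₂₂, Matrix.zero_apply] <;>
    first
      | exact matrix_entry_tendsto hX i j
      | exact matrix_entry_tendsto hY i j
      | exact tendsto_const_nhds

lemma superjetClosure_tendsto {N : ℕ} {Ω : Set (EuclideanSpace ℝ (Fin N))}
    {u : EuclideanSpace ℝ (Fin N) → ℝ} {xh p : EuclideanSpace ℝ (Fin N)}
    {Xs : ℕ → Matrix (Fin N) (Fin N) ℝ} {X : Matrix (Fin N) (Fin N) ℝ}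
    (h : ∀ k, SuperjetClosure Ω u xh p (Xs k)) (hlim : Tendsto Xs atTop (𝓝 X)) :
    SuperjetClosure Ω u xh p X := by
  have key : ∀ k : ℕ, ∃ (x' p' : EuclideanSpace ℝ (Fin N)) (X' : Matrix (Fin N) (Fin N) ℝ),
      x' ∈ Ω ∧ Superjet Ω u x' p' X' ∧ dist x' xh < 1/(k+1) ∧
      dist (u x') (u xh) < 1/(k+1) ∧ dist p' p < 1/(k+1) ∧
      ∀ i j, |X' i j - X i j| < 2/(k+1) := by
    intro k
    have hk : (0:ℝ) < 1/(k+1) := by positivity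
    have h0' : ∀ᶠ K in atTop, ∀ i j, |Xs K i j - X i j| < 1/(k+1) := by
      rw [eventually_all]
      intro i
      rw [eventually_all]
      intro j
      have := Metric.tendsto_nhds.mp (matrix_entry_tendsto hlim i j) _ hk
      simpa [Real.dist_eq] using this
    obtain ⟨K, hK⟩ := eventually_atTop.mp h0'
    obtain ⟨xs, ps, XS, hmem, hsj, h1, h2, h3, h4⟩ := h K
    obtain ⟨J1, hJ1⟩ := (Metric.tendsto_atTop.mp h1) (1/(k+1)) hk
    obtain ⟨J2, hJ2⟩ := (Metric.tendsto_atTop.mp h2) (1/(k+1)) hk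
    obtain ⟨J3, hJ3⟩ := (Metric.tendsto_atTop.mp h3) (1/(k+1)) hk
    have h4' : ∀ᶠ J in atTop, ∀ i j, |XS J i j - Xs K i j| < 1/(k+1) := by
      rw [eventually_all]
      intro i
      rw [eventually_all]
      intro j
      have := Metric.tendsto_nhds.mp (matrix_entry_tendsto h4 i j) _ hk
      simpa [Real.dist_eq] using this
    obtain ⟨J4, hJ4⟩ := eventually_atTop.mp h4'
    refine ⟨xs (max (max J1 J2) (max J3 J4)), ps (max (max J1 J2) (max J3 J4)),
      XS (max (max J1 J2) (max J3 J4)), hmem _, hsj _,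
      hJ1 _ (le_trans (le_max_left _ _) (le_max_left _ _)),
      hJ2 _ (le_trans (le_max_right _ _) (le_max_left _ _)),
      hJ3 _ (le_trans (le_max_left _ _) (le_max_right _ _)), ?_⟩
    intro i j
    calc |XS (max (max J1 J2) (max J3 J4)) i j - X i j|
        ≤ |XS (max (max J1 J2) (max J3 J4)) i j - Xs K i j| + |Xs K i j - X i j| :=
          abs_sub_le _ _ _
      _ < 1/(k+1) + 1/(k+1) :=
          add_lt_add (hJ4 _ (le_trans (le_max_right _ _) (le_max_right _ _)) i j)
            (hK K le_rfl i j)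
      _ = 2/(k+1) := by ring
  choose xs ps XS hmem hsj hd1 hd2 hd3 hd4 using key
  have h2lim : Tendsto (fun k : ℕ => 2/(k+1:ℝ)) atTop (𝓝 0) := by
    have := tendsto_one_div_add_atTop_nhds_zero_nat.const_mul (2:ℝ)
    simp only [mul_zero] at this
    convert this using 2 with k
    ring
  have hle : ∀ k : ℕ, (1:ℝ)/(k+1) ≤ 2/(k+1) := by
    intro k
    gcongr
    norm_num
  refine ⟨xs, ps, XS, hmem, hsj, ?_, ?_, ?_, ?_⟩
  · rw [tendsto_iff_dist_tendsto_zero]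
    exact squeeze_zero (fun k => dist_nonneg) (fun k => (hd1 k).le.trans (hle k)) h2lim
  · rw [tendsto_iff_dist_tendsto_zero]
    exact squeeze_zero (fun k => dist_nonneg) (fun k => (hd2 k).le.trans (hle k)) h2lim
  · rw [tendsto_iff_dist_tendsto_zero]
    exact squeeze_zero (fun k => dist_nonneg) (fun k => (hd3 k).le.trans (hle k)) h2lim
  · apply matrix_tendsto_of_entry
    intro i j
    rw [tendsto_iff_dist_tendsto_zero]
    refine squeeze_zero (fun k => dist_nonneg) (fun k => ?_) h2lim
    rw [Real.dist_eq]
    exact (hd4 k i j).le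

lemma subjetClosure_tendsto {N : ℕ} {Ω : Set (EuclideanSpace ℝ (Fin N))}
    {u : EuclideanSpace ℝ (Fin N) → ℝ} {xh p : EuclideanSpace ℝ (Fin N)}
    {Xs : ℕ → Matrix (Fin N) (Fin N) ℝ} {X : Matrix (Fin N) (Fin N) ℝ}
    (h : ∀ k, SubjetClosure Ω u xh p (Xs k)) (hlim : Tendsto Xs atTop (𝓝 X)) :
    SubjetClosure Ω u xh p X := by
  have key : ∀ k : ℕ, ∃ (x' p' : EuclideanSpace ℝ (Fin N)) (X' : Matrix (Fin N) (Fin N) ℝ),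
      x' ∈ Ω ∧ Subjet Ω u x' p' X' ∧ dist x' xh < 1/(k+1) ∧
      dist (u x') (u xh) < 1/(k+1) ∧ dist p' p < 1/(k+1) ∧
      ∀ i j, |X' i j - X i j| < 2/(k+1) := by
    intro k
    have hk : (0:ℝ) < 1/(k+1) := by positivity
    have h0' : ∀ᶠ K in atTop, ∀ i j, |Xs K i j - X i j| < 1/(k+1) := by
      rw [eventually_all]
      intro i
      rw [eventually_all]
      intro j
      have := Metric.tendsto_nhds.mp (matrix_entry_tendsto hlim i j) _ hk
      simpa [Real.dist_eq] using this
    obtain ⟨K, hK⟩ := eventually_atTop.mp h0'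
    obtain ⟨xs, ps, XS, hmem, hsj, h1, h2, h3, h4⟩ := h K
    obtain ⟨J1, hJ1⟩ := (Metric.tendsto_atTop.mp h1) (1/(k+1)) hk
    obtain ⟨J2, hJ2⟩ := (Metric.tendsto_atTop.mp h2) (1/(k+1)) hk
    obtain ⟨J3, hJ3⟩ := (Metric.tendsto_atTop.mp h3) (1/(k+1)) hk
    have h4' : ∀ᶠ J in atTop, ∀ i j, |XS J i j - Xs K i j| < 1/(k+1) := by
      rw [eventually_all]
      intro i
      rw [eventually_all]
      intro j
      have := Metric.tendsto_nhds.mp (matrix_entry_tendsto h4 i j) _ hk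
      simpa [Real.dist_eq] using this
    obtain ⟨J4, hJ4⟩ := eventually_atTop.mp h4'
    refine ⟨xs (max (max J1 J2) (max J3 J4)), ps (max (max J1 J2) (max J3 J4)),
      XS (max (max J1 J2) (max J3 J4)), hmem _, hsj _,
      hJ1 _ (le_trans (le_max_left _ _) (le_max_left _ _)),
      hJ2 _ (le_trans (le_max_right _ _) (le_max_left _ _)),
      hJ3 _ (le_trans (le_max_left _ _) (le_max_right _ _)), ?_⟩
    intro i j
    calc |XS (max (max J1 J2) (max J3 J4)) i j - X i j|
        ≤ |XS (max (max J1 J2) (max J3 J4)) i j - Xs K i j| + |Xs K i j - X i j| :=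
          abs_sub_le _ _ _
      _ < 1/(k+1) + 1/(k+1) :=
          add_lt_add (hJ4 _ (le_trans (le_max_right _ _) (le_max_right _ _)) i j)
            (hK K le_rfl i j)
      _ = 2/(k+1) := by ring
  choose xs ps XS hmem hsj hd1 hd2 hd3 hd4 using key
  have h2lim : Tendsto (fun k : ℕ => 2/(k+1:ℝ)) atTop (𝓝 0) := by
    have := tendsto_one_div_add_atTop_nhds_zero_nat.const_mul (2:ℝ)
    simp only [mul_zero] at this
    convert this using 2 with k
    ring
  have hle : ∀ k : ℕ, (1:ℝ)/(k+1) ≤ 2/(k+1) := by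
    intro k
    gcongr
    norm_num
  refine ⟨xs, ps, XS, hmem, hsj, ?_, ?_, ?_, ?_⟩
  · rw [tendsto_iff_dist_tendsto_zero]
    exact squeeze_zero (fun k => dist_nonneg) (fun k => (hd1 k).le.trans (hle k)) h2lim
  · rw [tendsto_iff_dist_tendsto_zero]
    exact squeeze_zero (fun k => dist_nonneg) (fun k => (hd2 k).le.trans (hle k)) h2lim
  · rw [tendsto_iff_dist_tendsto_zero]
    exact squeeze_zero (fun k => dist_nonneg) (fun k => (hd3 k).le.trans (hle k)) h2lim
  · apply matrix_tendsto_of_entry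
    intro i j
    rw [tendsto_iff_dist_tendsto_zero]
    refine squeeze_zero (fun k => dist_nonneg) (fun k => ?_) h2lim
    rw [Real.dist_eq]
    exact (hd4 k i j).le

/-- The main theorem: removing the `εA²` term from the theorem of sums
for equations of Class M, with lower bounds `g₁(·, E)⁻¹(0)·I ≤ X` and
`−g₂(·, D)⁻¹(0)·I ≤ −Y`. -/
theorem classM_theorem_of_sums {N : ℕ}
    (Ω : Set (EuclideanSpace ℝ (Fin N)))
    (D : Set (EuclideanSpace ℝ (Fin N) × ℝ × EuclideanSpace ℝ (Fin N) ×
      Matrix (Fin N) (Fin N) ℝ))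
    (hD : ∀ w ∈ D, w.1 ∈ Ω ∧ (w.2.2.2).IsHermitian)
    (F : EuclideanSpace ℝ (Fin N) × ℝ × EuclideanSpace ℝ (Fin N) ×
      Matrix (Fin N) (Fin N) ℝ → ℝ)
    (hFM : ClassM Ω D F)
    (u v : EuclideanSpace ℝ (Fin N) → ℝ)
    (hu : ∀ x ∈ Ω, ∀ (p : EuclideanSpace ℝ (Fin N)) (X : Matrix (Fin N) (Fin N) ℝ),
      SuperjetClosure Ω u x p X → (x, u x, p, X) ∈ D → F (x, u x, p, X) ≤ 0)
    (hv : ∀ y ∈ Ω, ∀ (q : EuclideanSpace ℝ (Fin N)) (Y : Matrix (Fin N) (Fin N) ℝ),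
      SubjetClosure Ω v y q Y → (y, v y, q, Y) ∈ D → 0 ≤ F (y, v y, q, Y))
    (xh yh : EuclideanSpace ℝ (Fin N)) (hxh : xh ∈ Ω) (hyh : yh ∈ Ω)
    (p q : EuclideanSpace ℝ (Fin N))
    (E₀ D₀ B₀ : Matrix (Fin N) (Fin N) ℝ) (hE₀ : E₀.IsHermitian) (hD₀ : D₀.IsHermitian)
    (A : Matrix (Fin N ⊕ Fin N) (Fin N ⊕ Fin N) ℝ) (hA : A = Matrix.fromBlocks E₀ B₀ B₀ᵀ D₀)
    (Et Dt : Matrix (Fin N) (Fin N) ℝ)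
    (hEt : Et = E₀ ^ 2 + B₀ * B₀ᵀ) (hDt : Dt = D₀ ^ 2 + B₀ᵀ * B₀)
    (S₁ S₂ : Set (Matrix (Fin N) (Fin N) ℝ))
    (hS₁ : S₁ = {M | ∃ ε : ℝ, 0 ≤ ε ∧ M = E₀ + ε • Et})
    (hS₂ : S₂ = {M | ∃ ε : ℝ, 0 ≤ ε ∧ M = D₀ + ε • Dt})
    (hS₁D : ∀ M ∈ S₁, (xh, u xh, p, M) ∈ D)
    (hS₂D : ∀ M ∈ S₂, (yh, v yh, q, M) ∈ D)
    (hjets : ∀ ε : ℝ, 0 < ε → ∃ Xe Ye : Matrix (Fin N) (Fin N) ℝ,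
      Xe.IsHermitian ∧ Ye.IsHermitian ∧
      SuperjetClosure Ω u xh p Xe ∧ SubjetClosure Ω v yh q Ye ∧
      (xh, u xh, p, Xe) ∈ D ∧ (yh, v yh, q, Ye) ∈ D ∧
      Loewner ((-(1 / ε + matOpNorm A)) • (1 : Matrix (Fin N ⊕ Fin N) (Fin N ⊕ Fin N) ℝ))
        (Matrix.fromBlocks Xe 0 0 (-Ye)) ∧
      Loewner (Matrix.fromBlocks Xe 0 0 (-Ye)) (A + ε • A ^ 2)) :
    ∃ X Y : Matrix (Fin N) (Fin N) ℝ,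
      X.IsHermitian ∧ Y.IsHermitian ∧
      SuperjetClosure Ω u xh p X ∧ SubjetClosure Ω v yh q Y ∧
      Loewner (Matrix.fromBlocks X 0 0 (-Y)) A ∧
      ∃ (g₁ g₂ : ℝ → Matrix (Fin N) (Fin N) ℝ → ℝ) (r₁ r₂ : Matrix (Fin N) (Fin N) ℝ → ℝ),
        ClassMWitness₁ D F (xh, u xh, p) S₁ g₁ r₁ ∧
        ClassMWitness₂ D F (yh, v yh, q) S₂ g₂ r₂ ∧
        Loewner ((r₁ E₀) • (1 : Matrix (Fin N) (Fin N) ℝ)) X ∧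
        Loewner ((-(r₂ D₀)) • (1 : Matrix (Fin N) (Fin N) ℝ)) (-Y) := by
  classical
  -- Hermitian and PSD facts about the block data
  have hE2 : (E₀ ^ 2).PosSemidef := by
    have h : E₀ ^ 2 = E₀ᴴ * E₀ := by rw [pow_two, hE₀.eq]
    rw [h]
    exact Matrix.posSemidef_conjTranspose_mul_self E₀
  have hD2 : (D₀ ^ 2).PosSemidef := by
    have h : D₀ ^ 2 = D₀ᴴ * D₀ := by rw [pow_two, hD₀.eq]
    rw [h]
    exact Matrix.posSemidef_conjTranspose_mul_self D₀
  have hBB : (B₀ * B₀ᵀ).PosSemidef := by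
    rw [← Matrix.conjTranspose_eq_transpose_of_trivial]
    exact Matrix.posSemidef_self_mul_conjTranspose B₀
  have hBtB : (B₀ᵀ * B₀).PosSemidef := by
    rw [← Matrix.conjTranspose_eq_transpose_of_trivial]
    exact Matrix.posSemidef_conjTranspose_mul_self B₀
  have hEtPSD : Et.PosSemidef := by rw [hEt]; exact hE2.add hBB
  have hDtPSD : Dt.PosSemidef := by rw [hDt]; exact hD2.add hBtB
  have hEtH : Et.IsHermitian := hEtPSD.1
  have hDtH : Dt.IsHermitian := hDtPSD.1
  have hS₁H : ∀ M ∈ S₁, M.IsHermitian := by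
    rw [hS₁]
    rintro M ⟨ε, hε, rfl⟩
    exact hE₀.add (herm_smul hEtH ε)
  have hS₂H : ∀ M ∈ S₂, M.IsHermitian := by
    rw [hS₂]
    rintro M ⟨ε, hε, rfl⟩
    exact hD₀.add (herm_smul hDtH ε)
  -- Class M witnesses
  obtain ⟨g₁, g₂x, r₁, r₂x, hW₁, -⟩ := hFM.2 (xh, u xh, p) hxh S₁ ∅ hS₁H (by simp) hS₁D (by simp)
  obtain ⟨g₁x, g₂, r₁x, r₂, -, hW₂⟩ := hFM.2 (yh, v yh, q) hyh ∅ S₂ (by simp) hS₂H (by simp) hS₂D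
  -- the approximating sequence
  have hjets' : ∀ k : ℕ, ∃ Xe Ye : Matrix (Fin N) (Fin N) ℝ,
      Xe.IsHermitian ∧ Ye.IsHermitian ∧
      SuperjetClosure Ω u xh p Xe ∧ SubjetClosure Ω v yh q Ye ∧
      (xh, u xh, p, Xe) ∈ D ∧ (yh, v yh, q, Ye) ∈ D ∧
      Loewner ((-(1 / (1/(k+1:ℝ)) + matOpNorm A)) •
        (1 : Matrix (Fin N ⊕ Fin N) (Fin N ⊕ Fin N) ℝ))
        (Matrix.fromBlocks Xe 0 0 (-Ye)) ∧
      Loewner (Matrix.fromBlocks Xe 0 0 (-Ye)) (A + (1/(k+1:ℝ)) • A ^ 2) :=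
    fun k => hjets (1/(k+1:ℝ)) (by positivity)
  choose Xs Ys hXh hYh hXsj hYsj hXD hYD hlb hub using hjets'
  clear hlb
  -- block decomposition of A + ε A²
  have hblock : ∀ k : ℕ, A + (1/(k+1:ℝ)) • A ^ 2 =
      Matrix.fromBlocks (E₀ + (1/(k+1:ℝ)) • Et) (B₀ + (1/(k+1:ℝ)) • (E₀*B₀ + B₀*D₀))
        (B₀ᵀ + (1/(k+1:ℝ)) • (B₀ᵀ*E₀ + D₀*B₀ᵀ)) (D₀ + (1/(k+1:ℝ)) • Dt) := by
    intro k
    rw [hA, pow_two, Matrix.fromBlocks_multiply, Matrix.fromBlocks_smul,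
      Matrix.fromBlocks_add]
    rw [hEt, hDt, pow_two E₀, pow_two D₀, add_comm (D₀*D₀) (B₀ᵀ*B₀)]
  have hXup : ∀ k : ℕ, Loewner (Xs k) (E₀ + (1/(k+1:ℝ)) • Et) := by
    intro k
    have h := hub k
    rw [hblock k] at h
    exact loewner_block₁ h
  have hYup : ∀ k : ℕ, Loewner (-(Ys k)) (D₀ + (1/(k+1:ℝ)) • Dt) := by
    intro k
    have h := hub k
    rw [hblock k] at h
    exact loewner_block₂ h
  -- membership of the upper bounds in S₁, S₂
  have hmem₁ : ∀ k : ℕ, (E₀ + (1/(k+1:ℝ)) • Et) ∈ S₁ := by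
    intro k
    rw [hS₁]
    exact ⟨1/(k+1:ℝ), by positivity, rfl⟩
  have hmem₂ : ∀ k : ℕ, (D₀ + (1/(k+1:ℝ)) • Dt) ∈ S₂ := by
    intro k
    rw [hS₂]
    exact ⟨1/(k+1:ℝ), by positivity, rfl⟩
  have hE₀S₁ : E₀ ∈ S₁ := by
    rw [hS₁]
    exact ⟨0, le_refl _, by simp⟩
  have hD₀S₂ : D₀ ∈ S₂ := by
    rw [hS₂]
    exact ⟨0, le_refl _, by simp⟩
  -- the PDE inequalities
  have hFle : ∀ k : ℕ, F (xh, u xh, p, Xs k) ≤ 0 := fun k => hu xh hxh p (Xs k) (hXsj k) (hXD k)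
  have hFge : ∀ k : ℕ, 0 ≤ F (yh, v yh, q, Ys k) := fun k => hv yh hyh q (Ys k) (hYsj k) (hYD k)
  -- eigenvalue bounds from Class M
  have hr₁ : ∀ k : ℕ, r₁ (E₀ + (1/(k+1:ℝ)) • Et) ≤ lam1 (Xs k) := by
    intro k
    have hb := hW₁.2.2.2 (Xs k) (hXD k) _ (hmem₁ k) (hXup k)
    have h0 : (0:ℝ) ≤ g₁ (lam1 (Xs k)) (E₀ + (1/(k+1:ℝ)) • Et) :=
      le_trans (by linarith [hFle k]) hb
    have hroot := hW₁.2.1 _ (hmem₁ k)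
    have hsm := (hW₁.1 _ (hmem₁ k)).1
    by_contra hc
    push_neg at hc
    have := hsm hc
    simp only at this
    linarith
  have hr₂ : ∀ k : ℕ, lamN (Ys k) ≤ r₂ (D₀ + (1/(k+1:ℝ)) • Dt) := by
    intro k
    have hb := hW₂.2.2.2 (Ys k) (hYD k) _ (hmem₂ k) (hYup k)
    have h0 : g₂ (lamN (Ys k)) (D₀ + (1/(k+1:ℝ)) • Dt) ≤ 0 :=
      le_trans hb (by linarith [hFge k])
    have hroot := hW₂.2.1 _ (hmem₂ k)
    have hsm := (hW₂.1 _ (hmem₂ k)).1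
    by_contra hc
    push_neg at hc
    have := hsm hc
    simp only at this
    linarith
  have hXlow : ∀ k : ℕ, (Xs k - r₁ (E₀ + (1/(k+1:ℝ)) • Et) • 1).PosSemidef := by
    intro k
    exact psd_sub_smul (hXh k) fun i => le_trans (hr₁ k) (lam1_le (hXh k) i)
  have hYlow : ∀ k : ℕ, (r₂ (D₀ + (1/(k+1:ℝ)) • Dt) • 1 - Ys k).PosSemidef := by
    intro k
    exact psd_smul_sub (hYh k) fun i => le_trans (le_lamN (hYh k) i) (hr₂ k)
  -- convergence of the roots
  have hεlim : Tendsto (fun k : ℕ => 1/(k+1:ℝ)) atTop (𝓝 0) :=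
    tendsto_one_div_add_atTop_nhds_zero_nat
  have hMone_lim : Tendsto (fun k : ℕ => E₀ + (1/(k+1:ℝ)) • Et) atTop (𝓝 E₀) := by
    have h1 : Tendsto (fun k : ℕ => E₀ + (1/(k+1:ℝ)) • Et) atTop (𝓝 (E₀ + (0:ℝ) • Et)) :=
      tendsto_const_nhds.add (hεlim.smul_const Et)
    simpa using h1
  have hMtwo_lim : Tendsto (fun k : ℕ => D₀ + (1/(k+1:ℝ)) • Dt) atTop (𝓝 D₀) := by
    have h1 : Tendsto (fun k : ℕ => D₀ + (1/(k+1:ℝ)) • Dt) atTop (𝓝 (D₀ + (0:ℝ) • Dt)) :=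
      tendsto_const_nhds.add (hεlim.smul_const Dt)
    simpa using h1
  have hr₁lim : Tendsto (fun k : ℕ => r₁ (E₀ + (1/(k+1:ℝ)) • Et)) atTop (𝓝 (r₁ E₀)) := by
    have hcw : ContinuousWithinAt r₁ S₁ E₀ := hW₁.2.2.1 E₀ hE₀S₁
    exact hcw.tendsto.comp
      (tendsto_nhdsWithin_of_tendsto_nhds_of_eventually_within _ hMone_lim
        (Filter.Eventually.of_forall hmem₁))
  have hr₂lim : Tendsto (fun k : ℕ => r₂ (D₀ + (1/(k+1:ℝ)) • Dt)) atTop (𝓝 (r₂ D₀)) := by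
    have hcw : ContinuousWithinAt r₂ S₂ D₀ := hW₂.2.2.1 D₀ hD₀S₂
    exact hcw.tendsto.comp
      (tendsto_nhdsWithin_of_tendsto_nhds_of_eventually_within _ hMtwo_lim
        (Filter.Eventually.of_forall hmem₂))
  -- uniform lower bounds
  obtain ⟨c₁, hc₁⟩ := hr₁lim.bddBelow_range
  have hc₁' : ∀ k : ℕ, c₁ ≤ r₁ (E₀ + (1/(k+1:ℝ)) • Et) := fun k => hc₁ ⟨k, rfl⟩
  obtain ⟨c₂, hc₂⟩ := hr₂lim.neg.bddBelow_range
  have hc₂' : ∀ k : ℕ, c₂ ≤ -(r₂ (D₀ + (1/(k+1:ℝ)) • Dt)) := fun k => hc₂ ⟨k, rfl⟩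
  have hXlow' : ∀ k : ℕ, Loewner (c₁ • 1) (Xs k) := by
    intro k
    show (Xs k - c₁ • 1).PosSemidef
    have he : Xs k - c₁ • 1 =
        (Xs k - r₁ (E₀ + (1/(k+1:ℝ)) • Et) • 1) +
          (r₁ (E₀ + (1/(k+1:ℝ)) • Et) - c₁) • (1 : Matrix (Fin N) (Fin N) ℝ) := by
      rw [sub_smul]
      abel
    rw [he]
    exact (hXlow k).add (psd_const_smul_one (by linarith [hc₁' k]))
  have hWlow' : ∀ k : ℕ, Loewner (c₂ • 1) (-(Ys k)) := by
    intro k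
    show (-(Ys k) - c₂ • 1).PosSemidef
    have he : -(Ys k) - c₂ • 1 =
        (r₂ (D₀ + (1/(k+1:ℝ)) • Dt) • 1 - Ys k) +
          (-(r₂ (D₀ + (1/(k+1:ℝ)) • Dt)) - c₂) • (1 : Matrix (Fin N) (Fin N) ℝ) := by
      rw [sub_smul, neg_smul]
      abel
    rw [he]
    exact (hYlow k).add (psd_const_smul_one (by linarith [hc₂' k]))
  -- uniform upper bounds
  have hεle : ∀ k : ℕ, (1:ℝ)/(k+1) ≤ 1 := by
    intro k
    rw [div_le_one (by positivity)]
    linarith [Nat.cast_nonneg (α := ℝ) k]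
  have hXup' : ∀ k : ℕ, Loewner (Xs k) (E₀ + Et) := by
    intro k
    show (E₀ + Et - Xs k).PosSemidef
    have he : E₀ + Et - Xs k =
        (E₀ + (1/(k+1:ℝ)) • Et - Xs k) + (1 - 1/(k+1:ℝ)) • Et := by
      rw [sub_smul, one_smul]
      abel
    rw [he]
    exact (hXup k).add (psd_smul hEtPSD (by linarith [hεle k]))
  have hWup' : ∀ k : ℕ, Loewner (-(Ys k)) (D₀ + Dt) := by
    intro k
    show (D₀ + Dt - -(Ys k)).PosSemidef
    have he : D₀ + Dt - -(Ys k) =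
        (D₀ + (1/(k+1:ℝ)) • Dt - -(Ys k)) + (1 - 1/(k+1:ℝ)) • Dt := by
      rw [sub_smul, one_smul]
      abel
    rw [he]
    exact (hYup k).add (psd_smul hDtPSD (by linarith [hεle k]))
  -- entrywise bounds and subsequence extraction
  have hXbd : ∀ k i j, |Xs k i j| ≤ 3 * (|c₁| + ∑ a, ∑ b, |(E₀ + Et) a b|) :=
    fun k i j => entry_bound (hXh k) (hXlow' k) (hXup' k) i j
  have hYbd : ∀ k i j, |Ys k i j| ≤ 3 * (|c₂| + ∑ a, ∑ b, |(D₀ + Dt) a b|) := by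
    intro k i j
    have h := entry_bound (hYh k).neg (hWlow' k) (hWup' k) i j
    rwa [Matrix.neg_apply, abs_neg] at h
  obtain ⟨X, φ, hφ, hXlim⟩ := exists_subseq_tendsto hXbd
  obtain ⟨Y, ψ, hψ, hYlim⟩ :=
    exists_subseq_tendsto (Xs := fun k => Ys (φ k)) (fun k i j => hYbd (φ k) i j)
  set σ : ℕ → ℕ := φ ∘ ψ with hσ
  have hσmono : StrictMono σ := hφ.comp hψ
  have hσtt : Tendsto σ atTop atTop := hσmono.tendsto_atTop
  have hψtt : Tendsto ψ atTop atTop := hψ.tendsto_atTop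
  have hXσ : Tendsto (fun k => Xs (σ k)) atTop (𝓝 X) := hXlim.comp hψtt
  have hYσ : Tendsto (fun k => Ys (σ k)) atTop (𝓝 Y) := hYlim
  -- the limit objects
  refine ⟨X, Y, isHermitian_of_tendsto (fun k => hXh (σ k)) hXσ,
    isHermitian_of_tendsto (fun k => hYh (σ k)) hYσ,
    superjetClosure_tendsto (fun k => hXsj (σ k)) hXσ,
    subjetClosure_tendsto (fun k => hYsj (σ k)) hYσ, ?_, g₁, g₂, r₁, r₂, hW₁, hW₂, ?_, ?_⟩
  · -- Loewner (fromBlocks X 0 0 (-Y)) A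
    show (A - Matrix.fromBlocks X 0 0 (-Y)).PosSemidef
    have hPk : ∀ k : ℕ, (A + (1/(σ k+1:ℝ)) • A ^ 2 -
        Matrix.fromBlocks (Xs (σ k)) 0 0 (-(Ys (σ k)))).PosSemidef := fun k => hub (σ k)
    refine posSemidef_of_tendsto hPk ?_
    have hεσ : Tendsto (fun k : ℕ => 1/(σ k+1:ℝ)) atTop (𝓝 0) := hεlim.comp hσtt
    have h1 : Tendsto (fun k : ℕ => A + (1/(σ k+1:ℝ)) • A ^ 2) atTop (𝓝 A) := by
      have h2 : Tendsto (fun k : ℕ => A + (1/(σ k+1:ℝ)) • A ^ 2) atTop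
          (𝓝 (A + (0:ℝ) • A ^ 2)) := tendsto_const_nhds.add (hεσ.smul_const (A ^ 2))
      simpa using h2
    exact h1.sub (tendsto_fromBlocks hXσ hYσ.neg)
  · -- Loewner (r₁ E₀ • 1) X
    show (X - r₁ E₀ • 1).PosSemidef
    refine posSemidef_of_tendsto (Ms := fun k =>
      Xs (σ k) - r₁ (E₀ + (1/(σ k+1:ℝ)) • Et) • 1) (fun k => hXlow (σ k)) ?_
    exact hXσ.sub (((hr₁lim.comp hσtt).smul_const 1))
  · -- Loewner ((-(r₂ D₀)) • 1) (-Y)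
    show (-Y - (-(r₂ D₀)) • 1).PosSemidef
    have he : -Y - (-(r₂ D₀)) • 1 = r₂ D₀ • (1 : Matrix (Fin N) (Fin N) ℝ) - Y := by
      rw [neg_smul]
      abel
    rw [he]
    refine posSemidef_of_tendsto (Ms := fun k =>
      r₂ (D₀ + (1/(σ k+1:ℝ)) • Dt) • 1 - Ys (σ k)) (fun k => hYlow (σ k)) ?_
    exact ((hr₂lim.comp hσtt).smul_const 1).sub hYσ
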